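/- Let k > 0 be a real number with 0.558·ln k ≥ 1 and set L = ⌊0.558·ln k⌋. For every real λ ≥ 6.5·L, the symmetric (L+1)×(L+1) matrix (e^{λ}/k)·D(λ) + (𝟙·z(λ)ᵀ + z(λ)·𝟙ᵀ) is negative definite. -/

import Mathlib

set_option maxHeartbeats 1000000

open Real Finset Matrix

-- x^n ≤ e^x * n! for x ≥ 0
lemma aux_pow_le_exp_mul_factorial {x : ℝ} (hx : 0 ≤ x) (n : ℕ) :
    x ^ n ≤ Real.exp x * n.factorial := by
  have h := Real.sum_le_exp_of_nonneg hx (n + 1)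
  have h2 : x ^ n / n.factorial ≤ ∑ i ∈ Finset.range (n + 1), x ^ i / i.factorial :=
    Finset.single_le_sum (f := fun i => x ^ i / (i.factorial : ℝ))
      (fun i _ => by positivity) (Finset.self_mem_range_succ n)
  have hf : (0:ℝ) < n.factorial := by positivity
  rw [div_le_iff₀ hf] at h2
  nlinarith [h2, Real.exp_pos x]

-- (i+j)! ≤ i! * lam^j  when i+j ≤ lam
lemma aux_fact_le (i : ℕ) (lam : ℝ) : ∀ j : ℕ, ((i + j : ℕ) : ℝ) ≤ lam →
    ((i + j).factorial : ℝ) ≤ (i.factorial : ℝ) * lam ^ j := by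
  intro j
  induction j with
  | zero => simp
  | succ j ih =>
    intro h
    have h1 : ((i + j : ℕ) : ℝ) ≤ lam := by
      push_cast at h ⊢; linarith
    have h2 := ih h1
    have h3 : ((i + (j+1)).factorial : ℝ) = ((i + j + 1 : ℕ) : ℝ) * ((i+j).factorial : ℝ) := by
      have : i + (j+1) = (i + j) + 1 := by ring
      rw [this, Nat.factorial_succ]; push_cast; ring
    have h4 : (0:ℝ) ≤ ((i+j).factorial : ℝ) := by positivity
    have h5 : ((i + j + 1 : ℕ) : ℝ) ≤ lam := by push_cast at h ⊢; linarith
    calc ((i + (j+1)).factorial : ℝ) = ((i + j + 1 : ℕ) : ℝ) * ((i+j).factorial : ℝ) := h3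
      _ ≤ lam * ((i.factorial : ℝ) * lam ^ j) := by
          exact mul_le_mul h5 h2 h4 (le_trans (Nat.cast_nonneg _) h5)
      _ = (i.factorial : ℝ) * lam ^ (j+1) := by ring

-- key scalar inequality
lemma aux_key (L : ℕ) (hL1 : 1 ≤ L) (k lam : ℝ) (hk : 0 < k)
    (hklt : k < Real.exp (((L:ℝ)+1) * (500/279)))
    (hlam : 6.5 * L ≤ lam) :
    2 * ((L:ℝ)+1) * k * lam ^ L < 143 * Real.exp lam * L.factorial := by
  have hLpos : (0:ℝ) < L := by exact_mod_cast hL1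
  have hlampos : (0:ℝ) < lam := by nlinarith
  set u : ℝ := 2 * lam / (13 * L) with hu
  have hupos : 0 < u := by positivity
  -- lam ≤ (13L/2) * exp u / exp 1
  have h1 : u ≤ Real.exp u / Real.exp 1 := by
    have := Real.add_one_le_exp (u - 1)
    rw [Real.exp_sub] at this
    linarith
  have hlam_le : lam ≤ 13 * L / 2 * (Real.exp u / Real.exp 1) := by
    have h2 : lam = 13 * L / 2 * u := by field_simp [hu]; rw [hu]; field_simp
    rw [h2]
    have : (0:ℝ) ≤ 13 * L / 2 := by positivity
    nlinarith [h1]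
  have hpowlam : lam ^ L ≤ (13 * L / 2 * (Real.exp u / Real.exp 1)) ^ L :=
    pow_le_pow_left₀ hlampos.le hlam_le L
  have hexpuL : (Real.exp u) ^ L = Real.exp (2 * lam / 13) := by
    rw [← Real.exp_nat_mul]
    congr 1
    field_simp [hu]
    rw [hu]; field_simp
  have hfactpos : (0:ℝ) < L.factorial := by positivity
  -- L^L / exp L ≤ L!
  have hstir : ((L:ℝ)) ^ L ≤ Real.exp L * L.factorial :=
    aux_pow_le_exp_mul_factorial hLpos.le L
  -- lam^L ≤ (13/2)^L * L! * exp(2 lam/13)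
  have hpow : lam ^ L ≤ (13/2) ^ L * L.factorial * Real.exp (2 * lam / 13) := by
    have hrw : (13 * L / 2 * (Real.exp u / Real.exp 1)) ^ L
        = (13/2)^L * ((L:ℝ))^L / (Real.exp 1)^L * Real.exp (2 * lam / 13) := by
      rw [← hexpuL]
      rw [show (13 * (L:ℝ) / 2 * (Real.exp u / Real.exp 1))
          = (13/2) * ((L:ℝ) / Real.exp 1) * Real.exp u by ring]
      rw [mul_pow, mul_pow, div_pow, div_pow]
      ring
    rw [hrw] at hpowlam
    have hexpL : (Real.exp 1 : ℝ) ^ L = Real.exp L := by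
      rw [← Real.exp_nat_mul]; norm_num
    have h3 : (13/2:ℝ)^L * ((L:ℝ))^L / (Real.exp 1)^L ≤ (13/2)^L * L.factorial := by
      rw [hexpL, div_le_iff₀ (Real.exp_pos _)]
      have h4 : (0:ℝ) ≤ (13/2:ℝ)^L := by positivity
      calc (13/2:ℝ)^L * ((L:ℝ))^L ≤ (13/2:ℝ)^L * (Real.exp L * L.factorial) :=
            mul_le_mul_of_nonneg_left hstir h4
        _ = (13/2:ℝ)^L * L.factorial * Real.exp L := by ring
    calc lam ^ L ≤ (13/2:ℝ)^L * ((L:ℝ))^L / (Real.exp 1)^L * Real.exp (2 * lam / 13) := hpowlam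
      _ ≤ (13/2)^L * L.factorial * Real.exp (2 * lam / 13) :=
          mul_le_mul_of_nonneg_right h3 (Real.exp_pos _).le
  -- (13/2)^L ≤ exp(2L)
  have h132 : (13/2:ℝ)^L ≤ Real.exp (2 * L) := by
    have he1 : (2.7182818283:ℝ) < Real.exp 1 := Real.exp_one_gt_d9
    have h5 : (13/2:ℝ) ≤ Real.exp 2 := by
      have : Real.exp 2 = Real.exp 1 * Real.exp 1 := by
        rw [← Real.exp_add]; norm_num
      nlinarith
    calc (13/2:ℝ)^L ≤ (Real.exp 2)^L := pow_le_pow_left₀ (by norm_num) h5 L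
      _ = Real.exp (2 * L) := by rw [← Real.exp_nat_mul]; ring_nf
  -- 2(L+1) ≤ 4 exp(L-1)
  have hL4 : 2 * ((L:ℝ)+1) ≤ 4 * Real.exp ((L:ℝ) - 1) := by
    have h := Real.add_one_le_exp ((L:ℝ) - 1)
    have hLge1 : (1:ℝ) ≤ L := by exact_mod_cast hL1
    nlinarith
  -- assemble
  have hlamL_pos : (0:ℝ) < lam ^ L := pow_pos hlampos L
  have hexp_big : 4 * Real.exp ((L:ℝ) - 1) * Real.exp (((L:ℝ)+1) * (500/279)) *
      Real.exp (2 * L) * Real.exp (2 * lam / 13) < 143 * Real.exp lam := by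
    rw [show (4:ℝ) * Real.exp ((L:ℝ) - 1) * Real.exp (((L:ℝ)+1) * (500/279)) *
        Real.exp (2 * L) * Real.exp (2 * lam / 13)
        = 4 * (Real.exp ((L:ℝ) - 1) * Real.exp (((L:ℝ)+1) * (500/279)) *
          Real.exp (2 * L) * Real.exp (2 * lam / 13)) by ring,
      ← Real.exp_add, ← Real.exp_add, ← Real.exp_add]
    set A : ℝ := (L:ℝ) - 1 + ((L:ℝ)+1) * (500/279) + 2*(L:ℝ) + 2*lam/13 with hA
    have hAle : A ≤ lam + 1 := by
      have h6 : 500 * ((L:ℝ)+1) ≤ 279 * (2.5 * L + 2) := by nlinarith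
      have h7 : (11:ℝ)/13 * lam ≥ 11/13 * (6.5 * L) := by nlinarith
      rw [hA]; nlinarith
    have h8 : Real.exp A ≤ Real.exp (lam + 1) := Real.exp_le_exp.mpr hAle
    have h9 : Real.exp (lam + 1) = Real.exp lam * Real.exp 1 := by rw [← Real.exp_add]
    have he2 : Real.exp 1 < 2.7182818286 := Real.exp_one_lt_d9
    nlinarith [Real.exp_pos lam, Real.exp_pos A]
  calc 2 * ((L:ℝ)+1) * k * lam ^ L
      ≤ 2 * ((L:ℝ)+1) * k * ((13/2) ^ L * L.factorial * Real.exp (2 * lam / 13)) := by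
        apply mul_le_mul_of_nonneg_left hpow
        positivity
    _ = (2 * ((L:ℝ)+1)) * k * (13/2)^L * Real.exp (2*lam/13) * L.factorial := by ring
    _ ≤ (4 * Real.exp ((L:ℝ)-1)) * Real.exp (((L:ℝ)+1)*(500/279)) * Real.exp (2*L) *
          Real.exp (2*lam/13) * L.factorial := by
        apply mul_le_mul_of_nonneg_right _ hfactpos.le
        apply mul_le_mul_of_nonneg_right _ (Real.exp_pos _).le
        have hk' : k ≤ Real.exp (((L:ℝ)+1) * (500/279)) := hklt.le
        have e1 : (0:ℝ) ≤ 2 * ((L:ℝ)+1) := by positivity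
        have e2 : (0:ℝ) ≤ 4 * Real.exp ((L:ℝ)-1) := by positivity
        have e3 : (0:ℝ) ≤ (13/2:ℝ)^L := by positivity
        calc 2*((L:ℝ)+1) * k * (13/2)^L
            ≤ (4 * Real.exp ((L:ℝ)-1)) * Real.exp (((L:ℝ)+1)*(500/279)) * Real.exp (2*L) := by
              apply mul_le_mul _ h132 e3 (by positivity)
              exact mul_le_mul hL4 hk' hk.le (by positivity)
          _ = _ := rfl
    _ < 143 * Real.exp lam * L.factorial := by
        apply mul_lt_mul_of_pos_right _ hfactpos
        exact hexp_big

lemma aux_diag_quad {n : ℕ} (d y : Fin n → ℝ) :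
    y ⬝ᵥ (Matrix.diagonal d *ᵥ y) = ∑ i, d i * y i ^ 2 := by
  simp only [dotProduct, Matrix.mulVec_diagonal]
  apply Finset.sum_congr rfl; intro i _; ring

lemma aux_vecMulVec_quad {n : ℕ} (u v y : Fin n → ℝ) :
    y ⬝ᵥ (Matrix.vecMulVec u v *ᵥ y) = (∑ i, y i * u i) * (∑ i, v i * y i) := by
  simp only [Matrix.mulVec, Matrix.vecMulVec_apply, dotProduct]
  rw [Finset.sum_mul_sum]
  apply Finset.sum_congr rfl; intro i _
  rw [Finset.mul_sum]
  apply Finset.sum_congr rfl; intro j _; ring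

theorem stmt_2 (k : ℝ) (hk : 0 < k) (hlog : 1 ≤ 0.558 * Real.log k)
    (L : ℕ) (hL : L = ⌊0.558 * Real.log k⌋₊)
    (lam : ℝ) (hlam : 6.5 * L ≤ lam)
    (D : Matrix (Fin (L + 1)) (Fin (L + 1)) ℝ)
    (hD : D = Matrix.diagonal (fun i : Fin (L + 1) =>
      ((i : ℝ) / lam - 1) * (Nat.factorial (i : ℕ) : ℝ) / lam ^ (i : ℕ)))
    (z : Fin (L + 1) → ℝ) (hz : z = fun i : Fin (L + 1) => (i : ℝ) / lam - 1)
    (M : Matrix (Fin (L + 1)) (Fin (L + 1)) ℝ)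
    (hM : M = (Real.exp lam / k) • D +
      (Matrix.vecMulVec (fun _ : Fin (L + 1) => (1 : ℝ)) z +
       Matrix.vecMulVec z (fun _ : Fin (L + 1) => (1 : ℝ)))) :
    M.IsSymm ∧ ∀ y : Fin (L + 1) → ℝ, y ≠ 0 → y ⬝ᵥ (M *ᵥ y) < 0 := by
  subst hM hD hz
  have hL1 : 1 ≤ L := by
    rw [hL]; exact Nat.le_floor (by exact_mod_cast hlog)
  have hLposR : (0:ℝ) < L := by exact_mod_cast hL1
  have hLge1 : (1:ℝ) ≤ L := by exact_mod_cast hL1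
  have hlampos : 0 < lam := by nlinarith
  have hLup : 0.558 * Real.log k < (L:ℝ) + 1 := by
    rw [hL]
    have := Nat.lt_floor_add_one (0.558 * Real.log k)
    push_cast at this ⊢
    linarith
  have hklt : k < Real.exp (((L:ℝ)+1) * (500/279)) := by
    have hlogk : Real.log k < ((L:ℝ)+1) * (500/279) := by nlinarith
    calc k = Real.exp (Real.log k) := (Real.exp_log hk).symm
      _ < _ := Real.exp_lt_exp.mpr hlogk
  have hkey := aux_key L hL1 k lam hk hklt hlam
  have hiL : ∀ i : Fin (L+1), ((i:ℕ):ℝ) ≤ (L:ℝ) := fun i => by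
    exact_mod_cast Nat.lt_succ_iff.mp i.isLt
  have hidiv : ∀ i : Fin (L+1), (0:ℝ) ≤ ((i:ℕ):ℝ)/lam ∧ ((i:ℕ):ℝ)/lam ≤ 2/13 := by
    intro i
    constructor
    · positivity
    · rw [div_le_iff₀ hlampos]; nlinarith [hiL i]
  constructor
  · -- symmetry
    rw [Matrix.IsSymm, transpose_add, transpose_add, transpose_smul,
      Matrix.diagonal_transpose]
    congr 1
    ext i j
    simp only [Matrix.transpose_apply, Matrix.add_apply, Matrix.vecMulVec_apply]
    ring
  · intro y hy
    set c : ℝ := Real.exp lam / k with hc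
    have hcpos : 0 < c := by positivity
    set u : ℝ := (L.factorial : ℝ) / lam ^ L with hu
    have hupos : 0 < u := by positivity
    set S : ℝ := ∑ i, y i with hS
    set W : ℝ := ∑ i : Fin (L+1), (((i:ℕ):ℝ)/lam) * y i with hW
    set P : ℝ := ∑ i, y i ^ 2 with hP
    have hPpos : 0 < P := by
      obtain ⟨i, hi⟩ := Function.ne_iff.mp hy
      have hi' : y i ≠ 0 := by simpa using hi
      have h1 : (0:ℝ) < y i ^ 2 := by positivity
      have h2 : y i ^ 2 ≤ ∑ j : Fin (L+1), y j ^ 2 :=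
        Finset.single_le_sum (f := fun j => y j ^ 2) (fun j _ => sq_nonneg _) (Finset.mem_univ i)
      rw [hP]; linarith
    have hQ : y ⬝ᵥ (((Real.exp lam / k) • Matrix.diagonal (fun i : Fin (L + 1) =>
          ((i : ℝ) / lam - 1) * (Nat.factorial (i : ℕ) : ℝ) / lam ^ (i : ℕ)) +
        (Matrix.vecMulVec (fun _ : Fin (L + 1) => (1 : ℝ))
            (fun i : Fin (L + 1) => (i : ℝ) / lam - 1) +
         Matrix.vecMulVec (fun i : Fin (L + 1) => (i : ℝ) / lam - 1)
            (fun _ : Fin (L + 1) => (1 : ℝ)))) *ᵥ y) =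
        c * (∑ i : Fin (L+1), ((i : ℝ) / lam - 1) * (Nat.factorial (i : ℕ) : ℝ) / lam ^ (i : ℕ) * y i ^ 2)
          + 2 * S * (∑ i : Fin (L+1), ((i : ℝ) / lam - 1) * y i) := by
      rw [Matrix.add_mulVec, Matrix.add_mulVec, dotProduct_add, dotProduct_add,
        Matrix.smul_mulVec, dotProduct_smul, aux_diag_quad,
        aux_vecMulVec_quad, aux_vecMulVec_quad]
      have e1 : ∑ i : Fin (L+1), y i * ((i : ℝ) / lam - 1)
          = ∑ i : Fin (L+1), ((i : ℝ) / lam - 1) * y i := by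
        apply Finset.sum_congr rfl; intros; ring
      have e2 : ∑ i : Fin (L+1), y i * (1:ℝ) = S := by rw [hS]; simp
      have e3 : ∑ i : Fin (L+1), (1:ℝ) * y i = S := by rw [hS]; simp
      rw [e1, e2, e3, smul_eq_mul]
      ring
    rw [hQ]
    have hT : (∑ i : Fin (L+1), ((i : ℝ) / lam - 1) * y i) = W - S := by
      rw [hW, hS, ← Finset.sum_sub_distrib]
      apply Finset.sum_congr rfl; intros; ring
    rw [hT]
    -- diagonal bound
    have hdiag : ∀ i : Fin (L+1),
        ((i : ℝ) / lam - 1) * (Nat.factorial (i : ℕ) : ℝ) / lam ^ (i : ℕ) ≤ -(11/13) * u := by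
      intro i
      have hiLe : (i:ℕ) ≤ L := Nat.lt_succ_iff.mp i.isLt
      have hui : u ≤ (Nat.factorial (i:ℕ) : ℝ) / lam ^ (i:ℕ) := by
        set j : ℕ := L - (i:ℕ) with hj
        have hij : (i:ℕ) + j = L := by omega
        have hcast : (((i:ℕ) + j : ℕ) : ℝ) ≤ lam := by
          rw [hij]; nlinarith
        have h1 := aux_fact_le (i:ℕ) lam j hcast
        rw [hij] at h1
        rw [hu, div_le_div_iff₀ (pow_pos hlampos L) (pow_pos hlampos _)]
        have h2 : lam ^ L = lam ^ (i:ℕ) * lam ^ j := by rw [← pow_add, hij]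
        have h3 : (0:ℝ) ≤ lam ^ (i:ℕ) := (pow_pos hlampos _).le
        calc (L.factorial : ℝ) * lam ^ (i:ℕ)
            ≤ ((Nat.factorial (i:ℕ) : ℝ) * lam ^ j) * lam ^ (i:ℕ) :=
              mul_le_mul_of_nonneg_right h1 h3
          _ = (Nat.factorial (i:ℕ) : ℝ) * lam ^ L := by rw [h2]; ring
      have hzi : (i : ℝ) / lam - 1 ≤ -(11/13) := by
        have := (hidiv i).2; linarith
      have hfpos : (0:ℝ) < (Nat.factorial (i:ℕ) : ℝ) / lam ^ (i:ℕ) := by positivity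
      have h4 : ((i : ℝ) / lam - 1) * ((Nat.factorial (i:ℕ) : ℝ) / lam ^ (i:ℕ))
          ≤ -(11/13) * ((Nat.factorial (i:ℕ) : ℝ) / lam ^ (i:ℕ)) :=
        mul_le_mul_of_nonneg_right hzi hfpos.le
      have h5 : -(11/13) * ((Nat.factorial (i:ℕ) : ℝ) / lam ^ (i:ℕ)) ≤ -(11/13) * u := by
        nlinarith
      calc ((i : ℝ) / lam - 1) * (Nat.factorial (i:ℕ) : ℝ) / lam ^ (i:ℕ)
          = ((i : ℝ) / lam - 1) * ((Nat.factorial (i:ℕ) : ℝ) / lam ^ (i:ℕ)) := by ring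
        _ ≤ -(11/13) * u := le_trans h4 h5
    have hdiag_sum : (∑ i : Fin (L+1), ((i : ℝ) / lam - 1) * (Nat.factorial (i : ℕ) : ℝ)
        / lam ^ (i : ℕ) * y i ^ 2) ≤ -(11/13) * u * P := by
      rw [hP, Finset.mul_sum]
      apply Finset.sum_le_sum
      intro i _
      exact mul_le_mul_of_nonneg_right (hdiag i) (sq_nonneg _)
    have hcross : 2 * S * (W - S) ≤ W^2/2 := by nlinarith [sq_nonneg (2*S - W)]
    have hW2 : W^2 ≤ (4*((L:ℝ)+1))/169 * P := by
      have hCS := Finset.sum_mul_sq_le_sq_mul_sq Finset.univ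
        (fun i : Fin (L+1) => ((i:ℕ):ℝ)/lam) y
      have h1 : (∑ i : Fin (L+1), (((i:ℕ):ℝ)/lam)^2) ≤ ((L:ℝ)+1) * (4/169) := by
        calc (∑ i : Fin (L+1), (((i:ℕ):ℝ)/lam)^2)
            ≤ ∑ _i : Fin (L+1), (4/169:ℝ) := by
              apply Finset.sum_le_sum
              intro i _
              nlinarith [(hidiv i).1, (hidiv i).2]
          _ = ((L:ℝ)+1) * (4/169) := by
              rw [Finset.sum_const, Finset.card_univ, Fintype.card_fin]
              ring
      have h2 : (0:ℝ) ≤ ∑ i : Fin (L+1), (((i:ℕ):ℝ)/lam)^2 :=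
        Finset.sum_nonneg (fun i _ => sq_nonneg _)
      rw [hW, hP]
      nlinarith [hCS, h1, h2, hPpos,
        mul_le_mul_of_nonneg_right h1 (le_of_lt hPpos)]
    have hcu : 2*((L:ℝ)+1)/169 < 11/13 * (c * u) := by
      rw [hc, hu]
      have h2 : (11:ℝ)/13 * (Real.exp lam / k * ((L.factorial:ℝ)/lam^L))
          = (11 * Real.exp lam * L.factorial) / (13 * k * lam^L) := by
        field_simp
      rw [h2, lt_div_iff₀ (by positivity)]
      nlinarith [hkey]
    calc c * (∑ i : Fin (L+1), ((i : ℝ) / lam - 1) * (Nat.factorial (i : ℕ) : ℝ)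
          / lam ^ (i : ℕ) * y i ^ 2) + 2 * S * (W - S)
        ≤ c * (-(11/13) * u * P) + W^2/2 := by
          have := mul_le_mul_of_nonneg_left hdiag_sum hcpos.le
          linarith
      _ ≤ -(11/13) * (c*u) * P + (2*((L:ℝ)+1)/169) * P := by nlinarith [hW2]
      _ = ((2*((L:ℝ)+1)/169) - 11/13 * (c*u)) * P := by ring
      _ < 0 := mul_neg_of_neg_of_pos (by linarith) hPpos
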